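/- Let 0 < q < 1 and let h : ℝ → ℝ be continuous and 2π-periodic. With A₀ = (1/π)·∫₀^{2π} h(τ) dτ, A_k = (1/(π(1+q^(2k))))·∫₀^{2π} h(τ)·cos(kτ) dτ, B_k = (1/(π(1−q^(2k))))·∫₀^{2π} h(τ)·sin(kτ) dτ, and f(r,θ) = A₀/2 + ∑_{k=1}^∞ [A_k·(r^k + q^(2k)·r^(−k))·cos(kθ) + B_k·(r^k − q^(2k)·r^(−k))·sin(kθ)], one has for every θ ∈ ℝ: f(r,θ) → h(θ) as r → 1 from the left. -/

import Mathlib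

open Real MeasureTheory intervalIntegral Filter Set



noncomputable def pker (r φ : ℝ) : ℝ := (1 - r^2) / (1 - 2*r*Real.cos φ + r^2)

lemma pker_denom_pos {r : ℝ} (h0 : 0 ≤ r) (h1 : r < 1) (φ : ℝ) :
    0 < 1 - 2*r*Real.cos φ + r^2 := by
  nlinarith [Real.cos_le_one φ, sq_nonneg (1 - r), mul_nonneg h0 (sub_nonneg.2 (Real.cos_le_one φ))]

lemma pker_nonneg {r : ℝ} (h0 : 0 ≤ r) (h1 : r < 1) (φ : ℝ) : 0 ≤ pker r φ := by
  have := pker_denom_pos h0 h1 φ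
  have h2 : (0:ℝ) ≤ 1 - r^2 := by nlinarith
  exact div_nonneg h2 this.le

lemma pker_cont {r : ℝ} (h0 : 0 ≤ r) (h1 : r < 1) : Continuous (pker r) := by
  apply continuous_const.div
  · continuity
  · exact fun φ => (pker_denom_pos h0 h1 φ).ne'

lemma hasSum_pker {r : ℝ} (h0 : 0 ≤ r) (h1 : r < 1) (φ : ℝ) :
    HasSum (fun k : ℕ => 2 * r^(k+1) * Real.cos (((k:ℝ)+1)*φ)) (pker r φ - 1) := by
  set z : ℂ := (r : ℂ) * Complex.exp (φ * Complex.I) with hz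
  have hnz : ‖z‖ < 1 := by
    rw [hz, norm_mul, Complex.norm_exp_ofReal_mul_I, mul_one, Complex.norm_real,
      Real.norm_of_nonneg h0]
    exact h1
  have hgeo : HasSum (fun k : ℕ => z ^ (k+1)) (z * (1 - z)⁻¹) := by
    have := (hasSum_geometric_of_norm_lt_one hnz).mul_left z
    simpa [pow_succ, mul_comm] using this
  have hre := hgeo.mapL Complex.reCLM
  have hre2 := hre.mul_left 2
  have hterm : ∀ k : ℕ, 2 * Complex.reCLM (z ^ (k+1)) = 2 * r^(k+1) * Real.cos (((k:ℝ)+1)*φ) := by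
    intro k
    have : z ^ (k+1) = ((r^(k+1) : ℝ) : ℂ) * Complex.exp ((((k:ℝ)+1)*φ : ℝ) * Complex.I) := by
      rw [hz, mul_pow, ← Complex.exp_nat_mul]
      push_cast
      ring_nf
    simp only [this, Complex.reCLM_apply, Complex.re_ofReal_mul, Complex.exp_ofReal_mul_I_re]
    ring
  have hval : 2 * Complex.reCLM (z * (1 - z)⁻¹) = pker r φ - 1 := by
    have hzre : z.re = r * Real.cos φ := by
      simp [hz, Complex.exp_re, Complex.exp_im]
    have hzim : z.im = r * Real.sin φ := by
      simp [hz, Complex.exp_re, Complex.exp_im]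
    have hD : Complex.normSq (1 - z) = 1 - 2*r*Real.cos φ + r^2 := by
      simp only [Complex.normSq_apply, Complex.sub_re, Complex.sub_im, Complex.one_re,
        Complex.one_im, hzre, hzim]
      nlinarith [Real.sin_sq_add_cos_sq φ]
    have hDpos := pker_denom_pos h0 h1 φ
    have : z * (1 - z)⁻¹ = z / (1 - z) := by ring
    rw [this]
    rw [Complex.reCLM_apply, Complex.div_re, hD]
    simp only [Complex.sub_re, Complex.sub_im, Complex.one_re, Complex.one_im, hzre, hzim]
    rw [pker]
    field_simp
    nlinarith [Real.sin_sq_add_cos_sq φ]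
  rw [← hval]
  exact hre2.congr_fun (fun k => (hterm k).symm)


lemma pker_def : ∀ (r φ : ℝ), pker r φ = (1 - r^2) / (1 - 2*r*Real.cos φ + r^2) := fun _ _ => rfl


lemma integral_cos_mul' (c : ℝ) (hc : c ≠ 0) (a b : ℝ) :
    ∫ φ in a..b, Real.cos (c * φ) = (Real.sin (c*b) - Real.sin (c*a)) / c := by
  have := intervalIntegral.integral_comp_mul_left (a := a) (b := b) (fun x => Real.cos x) hc
  rw [this, integral_cos]
  simp [smul_eq_mul]
  ring

lemma integral_cos_shift (k : ℕ) : ∫ φ in (-π)..π, Real.cos (((k:ℝ)+1)*φ) = 0 := by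
  have hc : ((k:ℝ)+1) ≠ 0 := by positivity
  rw [integral_cos_mul' _ hc]
  have h1 : Real.sin (((k:ℝ)+1)*π) = 0 := by
    have := Real.sin_nat_mul_pi (k+1)
    push_cast at this ⊢
    linarith
  have h2 : Real.sin (((k:ℝ)+1)*(-π)) = 0 := by
    rw [mul_neg, Real.sin_neg, h1, neg_zero]
  rw [h1, h2]; ring

/-- generic interchange over an interval: if `u k` are continuous with `‖u k τ‖ ≤ c k`
summable on `[a,b]`, then `∑' ∫ = ∫ ∑'`. -/
lemma tsum_intervalIntegral (a b : ℝ) (hab : a ≤ b) (u : ℕ → ℝ → ℝ) (c : ℕ → ℝ)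
    (hu : ∀ k, Continuous (u k)) (hbd : ∀ k τ, τ ∈ Set.Ioc a b → |u k τ| ≤ c k)
    (hc : Summable c) :
    ∑' k, (∫ τ in a..b, u k τ) = ∫ τ in a..b, (∑' k, u k τ) := by
  have hint : ∀ k, IntegrableOn (u k) (Set.Ioc a b) volume :=
    fun k => (hu k).integrableOn_Ioc
  have key := MeasureTheory.integral_tsum_of_summable_integral_norm
    (μ := volume.restrict (Set.Ioc a b)) (F := u) (fun k => hint k) ?_
  · rw [intervalIntegral.integral_of_le hab]
    rw [← key]
    congr 1
    ext k
    rw [intervalIntegral.integral_of_le hab]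
  · apply Summable.of_nonneg_of_le (fun k => integral_nonneg (fun τ => norm_nonneg _))
      (fun k => ?_) (hc.mul_right (b - a))
    have h1 : ∫ τ in Set.Ioc a b, ‖u k τ‖ ∂volume ≤ ∫ τ in Set.Ioc a b, c k ∂volume := by
      apply integral_mono_of_nonneg (Filter.Eventually.of_forall fun τ => norm_nonneg _)
        (integrable_const _)
      filter_upwards [ae_restrict_mem measurableSet_Ioc] with τ hτ
      exact hbd k τ hτ
    rw [MeasureTheory.integral_const] at h1
    simpa [Real.volume_Ioc, ENNReal.toReal_ofReal (sub_nonneg.2 hab), smul_eq_mul, max_eq_left (sub_nonneg.2 hab),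
      mul_comm] using h1

lemma summable_pow_succ {r : ℝ} (h0 : 0 ≤ r) (h1 : r < 1) : Summable (fun k : ℕ => r^(k+1)) := by
  have := summable_geometric_of_lt_one h0 h1
  exact (summable_nat_add_iff 1).2 this

lemma integral_pker {r : ℝ} (h0 : 0 ≤ r) (h1 : r < 1) :
    ∫ φ in (-π)..π, pker r φ = 2*π := by
  have hpi : (-π) ≤ π := by linarith [Real.pi_pos]
  have hsum : ∀ φ, (∑' k : ℕ, 2 * r^(k+1) * Real.cos (((k:ℝ)+1)*φ)) = pker r φ - 1 :=
    fun φ => (hasSum_pker h0 h1 φ).tsum_eq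
  have hkey : ∫ φ in (-π)..π, (pker r φ - 1) = 0 := by
    have hI := tsum_intervalIntegral (-π) π hpi
      (fun k φ => 2 * r^(k+1) * Real.cos (((k:ℝ)+1)*φ)) (fun k => 2 * r^(k+1))
      (fun k => by continuity)
      (fun k τ _ => by
        rw [abs_mul, abs_mul]
        have : |Real.cos (((k:ℝ)+1)*τ)| ≤ 1 := Real.abs_cos_le_one _
        have h2 : |(2:ℝ)| * |r^(k+1)| = 2 * r^(k+1) := by
          rw [abs_of_nonneg (by positivity : (0:ℝ) ≤ r^(k+1))]; norm_num
        calc |(2:ℝ)| * |r^(k+1)| * |Real.cos (((k:ℝ)+1)*τ)| ≤ |(2:ℝ)| * |r^(k+1)| * 1 := by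
              apply mul_le_mul_of_nonneg_left this (by positivity)
          _ = 2 * r^(k+1) := by rw [mul_one, h2])
      ((summable_pow_succ h0 h1).mul_left 2)
    have : ∀ φ, (∑' k : ℕ, 2 * r^(k+1) * Real.cos (((k:ℝ)+1)*φ)) = pker r φ - 1 := hsum
    rw [funext this] at hI
    rw [← hI]
    have : ∀ k : ℕ, (∫ τ in (-π)..π, 2 * r^(k+1) * Real.cos (((k:ℝ)+1)*τ)) = 0 := by
      intro k
      rw [intervalIntegral.integral_const_mul, integral_cos_shift, mul_zero]
    rw [funext this, tsum_zero]
  have hint1 : IntervalIntegrable (pker r) volume (-π) π :=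
    (pker_cont h0 h1).intervalIntegrable _ _
  have := intervalIntegral.integral_sub hint1 (_root_.intervalIntegrable_const (c := (1:ℝ)))
  rw [hkey] at this
  have h1' : ∫ φ in (-π)..π, (1:ℝ) = 2*π := by simp; ring
  linarith [this, h1']



lemma periodic_bound {h : ℝ → ℝ} (hcont : Continuous h) (hper : Function.Periodic h (2*π)) :
    ∃ C : ℝ, 0 < C ∧ ∀ x, |h x| ≤ C := by
  obtain ⟨C, hC⟩ := (isCompact_Icc (a := (0:ℝ)) (b := 2*π)).exists_bound_of_continuousOn
    hcont.continuousOn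
  refine ⟨max C 1, lt_of_lt_of_le one_pos (le_max_right _ _), fun x => ?_⟩
  have h2pi : (0:ℝ) < 2*π := by positivity
  have hmem : x - ⌊x / (2*π)⌋ * (2*π) ∈ Set.Icc 0 (2*π) := by
    constructor
    · exact Int.sub_floor_div_mul_nonneg x h2pi
    · exact (Int.sub_floor_div_mul_lt x h2pi).le
  have h2 := hC _ hmem
  rw [hper.sub_int_mul_eq, Real.norm_eq_abs] at h2
  exact h2.trans (le_max_left _ _)

lemma pker_periodic {r : ℝ} : Function.Periodic (pker r) (2*π) := by
  intro x; rw [pker_def, pker_def, Real.cos_add_two_pi]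

lemma poisson_shift {h : ℝ → ℝ} (hcont : Continuous h) (hper : Function.Periodic h (2*π))
    (θ : ℝ) {r : ℝ} (h0 : 0 ≤ r) (h1 : r < 1) :
    ∫ τ in (0:ℝ)..(2*π), h τ * pker r (θ - τ) = ∫ φ in (-π)..π, h (θ - φ) * pker r φ := by
  have hF : Function.Periodic (fun τ => h τ * pker r (θ - τ)) (2*π) := by
    intro x
    simp only []
    rw [hper x]
    congr 1
    have : θ - (x + 2*π) = (θ - x) - 2*π := by ring
    rw [this, pker_def, pker_def, Real.cos_sub_two_pi]
  have e1 : ∫ τ in (0:ℝ)..(2*π), h τ * pker r (θ - τ)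
      = ∫ τ in (θ-π)..(θ-π)+2*π, h τ * pker r (θ - τ) := by
    have := hF.intervalIntegral_add_eq 0 (θ-π)
    simpa using this
  rw [e1]
  have e2 : ∫ τ in (θ-π)..(θ-π)+2*π, h τ * pker r (θ - τ)
      = ∫ τ in (θ-π)..(θ+π), (fun u => h (θ - u) * pker r u) (θ - τ) := by
    have : (θ-π)+2*π = θ+π := by ring
    rw [this]
    apply intervalIntegral.integral_congr
    intro τ _
    simp only []
    congr 2 <;> ring
  rw [e2, intervalIntegral.integral_comp_sub_left (fun u => h (θ - u) * pker r u) θ]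
  have : θ - (θ+π) = -π := by ring
  have h2 : θ - (θ-π) = π := by ring
  rw [this, h2]

set_option maxHeartbeats 2000000 in
theorem poisson_limit {h : ℝ → ℝ} (hcont : Continuous h) (hper : Function.Periodic h (2*π))
    (θ : ℝ) :
    Tendsto (fun r => (1/(2*π)) * ∫ τ in (0:ℝ)..(2*π), h τ * pker r (θ - τ))
      (nhdsWithin 1 (Set.Iio 1)) (nhds (h θ)) := by
  obtain ⟨C, hCpos, hC⟩ := periodic_bound hcont hper
  have hpi := Real.pi_pos
  rw [Metric.tendsto_nhds]
  intro ε hε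
  -- choose δ
  have hcont' : ContinuousAt (fun φ => h (θ - φ)) 0 := by
    exact (hcont.comp (continuous_const.sub continuous_id)).continuousAt
  have : ∀ᶠ φ in nhds (0:ℝ), |h (θ - φ) - h θ| < ε/4 := by
    have h4 : (0:ℝ) < ε/4 := by linarith
    have hx := Metric.tendsto_nhds.1 hcont'.tendsto (ε/4) h4
    simp only [Real.dist_eq, sub_zero] at hx
    exact hx
  obtain ⟨δ₀, hδ₀pos, hδ₀⟩ := Metric.eventually_nhds_iff.1 this
  set δ := min (δ₀/2) (π/2) with hδdef
  have hδpos : 0 < δ := lt_min (by linarith) (by linarith)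
  have hδltπ : δ < π := lt_of_le_of_lt (min_le_right _ _) (by linarith)
  have hδsmall : ∀ φ, |φ| ≤ δ → |h (θ - φ) - h θ| ≤ ε/4 := by
    intro φ hφ
    have : dist φ 0 < δ₀ := by
      rw [Real.dist_eq, sub_zero]
      exact lt_of_le_of_lt hφ (lt_of_le_of_lt (min_le_left _ _) (by linarith))
    exact (hδ₀ this).le
  have hcosδ : 0 < 1 - Real.cos δ := by
    have : Real.cos δ < Real.cos 0 := by
      apply Real.cos_lt_cos_of_nonneg_of_le_pi le_rfl hδltπ.le hδpos
    rw [Real.cos_zero] at this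
    linarith
  -- eventual set of r
  set r₁ : ℝ := max (1/2) (1 - (1 - Real.cos δ) * ε / (16 * C)) with hr₁
  have hr₁lt : r₁ < 1 := by
    apply max_lt (by norm_num)
    have : 0 < (1 - Real.cos δ) * ε / (16 * C) := by positivity
    linarith
  have hevent : Set.Ioo r₁ 1 ∈ nhdsWithin 1 (Set.Iio 1) :=
    Ioo_mem_nhdsLT_of_mem ⟨hr₁lt, le_refl 1⟩
  filter_upwards [hevent] with r hr
  obtain ⟨hrlo, hrhi⟩ := hr
  have hr0 : (0:ℝ) ≤ r := le_trans (by norm_num) (le_trans (le_max_left _ _) hrlo.le)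
  have hrhalf : (1:ℝ)/2 < r := lt_of_le_of_lt (le_max_left _ _) hrlo
  -- rewrite main quantity
  rw [Real.dist_eq, poisson_shift hcont hper θ hr0 hrhi]
  have hmass := integral_pker hr0 hrhi
  have hconst : h θ = (1/(2*π)) * ∫ φ in (-π)..π, h θ * pker r φ := by
    rw [intervalIntegral.integral_const_mul, hmass]
    field_simp
  rw [hconst]
  have hint : ∀ a b : ℝ, IntervalIntegrable (fun φ => (h (θ - φ) - h θ) * pker r φ) volume a b := by
    intro a b
    apply Continuous.intervalIntegrable
    exact ((hcont.comp (continuous_const.sub continuous_id)).sub continuous_const).mul (pker_cont hr0 hrhi)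
  have hsplit : (1/(2*π)) * (∫ φ in (-π)..π, h (θ - φ) * pker r φ)
      - (1/(2*π)) * (∫ φ in (-π)..π, h θ * pker r φ)
      = (1/(2*π)) * ∫ φ in (-π)..π, (h (θ - φ) - h θ) * pker r φ := by
    rw [← mul_sub]
    congr 1
    rw [← intervalIntegral.integral_sub]
    · apply intervalIntegral.integral_congr; intro φ _; ring
    · exact ((hcont.comp (continuous_const.sub continuous_id)).mul (pker_cont hr0 hrhi)).intervalIntegrable _ _
    · exact (continuous_const.mul (pker_cont hr0 hrhi)).intervalIntegrable _ _
  rw [hsplit]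
  -- split the integral
  have hadd1 := intervalIntegral.integral_add_adjacent_intervals (a := -π) (b := -δ) (c := δ)
    (hint _ _) (hint _ _)
  have hadd2 := intervalIntegral.integral_add_adjacent_intervals (a := -π) (b := δ) (c := π)
    (hint _ _) (hint _ _)
  set I1 := ∫ φ in (-π)..(-δ), (h (θ - φ) - h θ) * pker r φ with hI1
  set I2 := ∫ φ in (-δ)..δ, (h (θ - φ) - h θ) * pker r φ with hI2
  set I3 := ∫ φ in δ..π, (h (θ - φ) - h θ) * pker r φ with hI3
  have htotal : (∫ φ in (-π)..π, (h (θ - φ) - h θ) * pker r φ) = I1 + I2 + I3 := by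
    rw [← hadd2, ← hadd1]
  rw [htotal]
  -- far bound on pker
  have hfar : ∀ φ, δ ≤ |φ| → |φ| ≤ π → pker r φ ≤ 2*(1-r)/(1 - Real.cos δ) := by
    intro φ hφ1 hφ2
    have hcosφ : Real.cos φ ≤ Real.cos δ := by
      rw [← Real.cos_abs φ]
      exact Real.cos_le_cos_of_nonneg_of_le_pi hδpos.le hφ2 hφ1
    rw [pker_def]
    rw [div_le_div_iff₀ (pker_denom_pos hr0 hrhi φ) (by positivity)]
    have h2 : 1 - Real.cos δ ≤ 1 - 2*r*Real.cos φ + r^2 := by nlinarith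
    nlinarith [hcosδ, hr0, hrhi.le, sq_nonneg (1-r), mul_le_mul_of_nonneg_left hcosφ (by linarith : (0:ℝ) ≤ 2*r)]
  -- bound I1 and I3
  have hfarbound : ∀ (a b : ℝ), -π ≤ a → b ≤ π → (∀ x ∈ Set.uIoc a b, δ ≤ |x|) → a ≤ b →
      |∫ φ in a..b, (h (θ - φ) - h θ) * pker r φ| ≤ (2*C) * (2*(1-r)/(1 - Real.cos δ)) * (b - a) := by
    intro a b ha hb habs hab
    have := intervalIntegral.norm_integral_le_of_norm_le_const
      (C := (2*C) * (2*(1-r)/(1 - Real.cos δ)))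
      (f := fun φ => (h (θ - φ) - h θ) * pker r φ) (a := a) (b := b) ?_
    · rw [Real.norm_eq_abs] at this
      rw [abs_of_nonneg (by linarith : (0:ℝ) ≤ b - a)] at this
      exact this
    · intro x hx
      rw [Real.norm_eq_abs, abs_mul]
      have hxabs : δ ≤ |x| := habs x hx
      have hxle : |x| ≤ π := by
        rcases Set.mem_uIoc.1 hx with h' | h'
        · rw [abs_le]; constructor <;> [linarith [h'.1]; linarith [h'.2]]
        · rw [abs_le]; constructor <;> [linarith [h'.1]; linarith [h'.2]]
      have h1 : |h (θ - x) - h θ| ≤ 2*C := by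
        calc |h (θ - x) - h θ| ≤ |h (θ - x)| + |h θ| := abs_sub _ _
          _ ≤ C + C := add_le_add (hC _) (hC _)
          _ = 2*C := by ring
      have h2 : |pker r x| ≤ 2*(1-r)/(1 - Real.cos δ) := by
        rw [abs_of_nonneg (pker_nonneg hr0 hrhi x)]
        exact hfar x hxabs hxle
      exact mul_le_mul h1 h2 (abs_nonneg _) (by linarith)
  -- bound I2
  have hI2b : |I2| ≤ (ε/4) * (2*π) := by
    have hb1 : |I2| ≤ |∫ φ in (-δ)..δ, (ε/4) * pker r φ| := by
      rw [hI2, ← Real.norm_eq_abs]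
      apply intervalIntegral.norm_integral_le_abs_of_norm_le
      · filter_upwards [ae_restrict_mem measurableSet_uIoc] with x hx
        rw [Real.norm_eq_abs, abs_mul]
        have hxd : |x| ≤ δ := by
          rcases Set.mem_uIoc.1 hx with h' | h'
          · rw [abs_le]; exact ⟨h'.1.le, h'.2⟩
          · rw [abs_le]; exact ⟨by linarith [h'.1], by linarith [h'.2]⟩
        rw [abs_of_nonneg (pker_nonneg hr0 hrhi x)]
        exact mul_le_mul_of_nonneg_right (hδsmall x hxd) (pker_nonneg hr0 hrhi x)
      · exact (continuous_const.mul (pker_cont hr0 hrhi)).intervalIntegrable _ _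
    have hb2 : ∫ φ in (-δ)..δ, (ε/4) * pker r φ = (ε/4) * ∫ φ in (-δ)..δ, pker r φ :=
      intervalIntegral.integral_const_mul _ _
    have hpint : ∀ a b : ℝ, IntervalIntegrable (pker r) volume a b :=
      fun a b => (pker_cont hr0 hrhi).intervalIntegrable _ _
    have hmono : ∫ φ in (-δ)..δ, pker r φ ≤ 2*π := by
      have e1 := intervalIntegral.integral_add_adjacent_intervals (a := -π) (b := -δ) (c := δ)
        (hpint _ _) (hpint _ _)
      have e2 := intervalIntegral.integral_add_adjacent_intervals (a := -π) (b := δ) (c := π)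
        (hpint _ _) (hpint _ _)
      have n1 : 0 ≤ ∫ φ in (-π)..(-δ), pker r φ :=
        intervalIntegral.integral_nonneg (by linarith) (fun x _ => pker_nonneg hr0 hrhi x)
      have n3 : 0 ≤ ∫ φ in δ..π, pker r φ :=
        intervalIntegral.integral_nonneg (by linarith) (fun x _ => pker_nonneg hr0 hrhi x)
      have := hmass
      linarith [e1, e2]
    have hnn : 0 ≤ ∫ φ in (-δ)..δ, pker r φ :=
      intervalIntegral.integral_nonneg (by linarith) (fun x _ => pker_nonneg hr0 hrhi x)
    calc |I2| ≤ |∫ φ in (-δ)..δ, (ε/4) * pker r φ| := hb1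
      _ = (ε/4) * ∫ φ in (-δ)..δ, pker r φ := by
          rw [hb2, abs_of_nonneg (by positivity)]
      _ ≤ (ε/4) * (2*π) := by
          apply mul_le_mul_of_nonneg_left hmono (by linarith)
  -- bound I1, I3
  have hI1b : |I1| ≤ (2*C) * (2*(1-r)/(1 - Real.cos δ)) * π := by
    have := hfarbound (-π) (-δ) le_rfl (by linarith) ?_ (by linarith)
    · refine this.trans ?_
      have hc : (0:ℝ) ≤ (2*C) * (2*(1-r)/(1 - Real.cos δ)) := by
        have : (0:ℝ) ≤ 1 - r := by linarith
        positivity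
      apply mul_le_mul_of_nonneg_left _ hc
      linarith
    · intro x hx
      rw [Set.uIoc_of_le (by linarith : -π ≤ -δ)] at hx
      rw [abs_of_nonpos (by linarith [hx.2] : x ≤ 0)]
      linarith [hx.2]
  have hI3b : |I3| ≤ (2*C) * (2*(1-r)/(1 - Real.cos δ)) * π := by
    have := hfarbound δ π (by linarith) le_rfl ?_ (by linarith)
    · refine this.trans ?_
      have hc : (0:ℝ) ≤ (2*C) * (2*(1-r)/(1 - Real.cos δ)) := by
        have : (0:ℝ) ≤ 1 - r := by linarith
        positivity
      apply mul_le_mul_of_nonneg_left _ hc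
      linarith
    · intro x hx
      rw [Set.uIoc_of_le (by linarith : δ ≤ π)] at hx
      rw [abs_of_nonneg (by linarith [hx.1] : 0 ≤ x)]
      linarith [hx.1]
  -- combine
  have hrclose : 1 - r < (1 - Real.cos δ) * ε / (16 * C) := by
    have hle : 1 - (1 - Real.cos δ) * ε / (16 * C) ≤ r₁ := by
      rw [hr₁]; exact le_max_right _ _
    linarith [lt_of_le_of_lt hle hrlo]
  have hfartot : (2*C) * (2*(1-r)/(1 - Real.cos δ)) * π ≤ ε * π / 4 := by
    have hr16 : (1-r) * (16*C) < (1 - Real.cos δ) * ε :=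
      (lt_div_iff₀ (by positivity : (0:ℝ) < 16*C)).1 hrclose
    have key : (2*C) * (2*(1-r)/(1 - Real.cos δ)) ≤ ε/4 := by
      rw [mul_div_assoc', div_le_iff₀ hcosδ]
      nlinarith
    calc (2*C) * (2*(1-r)/(1 - Real.cos δ)) * π ≤ (ε/4) * π :=
          mul_le_mul_of_nonneg_right key hpi.le
      _ = ε * π / 4 := by ring
  have htri : |(1/(2*π)) * (I1 + I2 + I3)| ≤ (1/(2*π)) * (|I1| + |I2| + |I3|) := by
    rw [abs_mul, abs_of_nonneg (by positivity : (0:ℝ) ≤ 1/(2*π))]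
    apply mul_le_mul_of_nonneg_left _ (by positivity)
    calc |I1 + I2 + I3| ≤ |I1 + I2| + |I3| := abs_add_le _ _
      _ ≤ |I1| + |I2| + |I3| := by linarith [abs_add_le I1 I2]
  have hfinal : (1/(2*π)) * (|I1| + |I2| + |I3|) < ε := by
    have hsum : |I1| + |I2| + |I3| ≤ ε * π / 4 + (ε/4) * (2*π) + ε * π / 4 := by
      linarith [hI1b.trans hfartot, hI3b.trans hfartot, hI2b]
    calc (1/(2*π)) * (|I1| + |I2| + |I3|) ≤ (1/(2*π)) * (ε*π/4 + (ε/4)*(2*π) + ε*π/4) := by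
          apply mul_le_mul_of_nonneg_left hsum (by positivity)
      _ = ε/2 := by field_simp; ring
      _ < ε := by linarith
  exact lt_of_le_of_lt htri hfinal



noncomputable def cP (q r : ℝ) (k : ℕ) : ℝ := (r^k + q^(2*k) * (r^k)⁻¹) / (1 + q^(2*k))
noncomputable def cQ (q r : ℝ) (k : ℕ) : ℝ := (r^k - q^(2*k) * (r^k)⁻¹) / (1 - q^(2*k))

lemma qpow_facts {q : ℝ} (hq0 : 0 < q) (hq1 : q < 1) (k : ℕ) (hk : 1 ≤ k) :
    0 < q^k ∧ q^k ≤ q ∧ q^(2*k) = (q^k)^2 ∧ q^(2*k) ≤ q^2 ∧ 0 < 1 - q^(2*k) ∧ 1 - q^2 ≤ 1 - q^(2*k) := by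
  have h1 : 0 < q^k := pow_pos hq0 k
  have h2 : q^k ≤ q := by
    calc q^k ≤ q^1 := pow_le_pow_of_le_one hq0.le hq1.le hk
      _ = q := pow_one q
  have h3 : q^(2*k) = (q^k)^2 := by rw [pow_mul']
  have h4 : q^(2*k) ≤ q^2 := by rw [h3]; exact pow_le_pow_left₀ h1.le h2 2
  have h5 : 0 < 1 - q^(2*k) := by
    have : q^2 < 1 := by nlinarith
    nlinarith
  exact ⟨h1, h2, h3, h4, h5, by linarith⟩

lemma cP_bounds {q r : ℝ} (hq0 : 0 < q) (hq1 : q < 1) (hr : r ∈ Set.Ioo q 1)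
    (k : ℕ) (hk : 1 ≤ k) :
    |cP q r k - r^k| ≤ q^k ∧ |cQ q r k - r^k| ≤ q^k/(1-q^2)
      ∧ |cP q r k| ≤ r^k + q^k ∧ |cQ q r k| ≤ (r^k+q^k)/(1-q^2) := by
  obtain ⟨hb, hbq, hs, hsq, hs1, hs2⟩ := qpow_facts hq0 hq1 k hk
  have hr0 : 0 < r := hq0.trans hr.1
  have ha : 0 < r^k := pow_pos hr0 k
  have ha1 : r^k ≤ 1 := pow_le_one₀ hr0.le hr.2.le
  have hba : q^k ≤ r^k := pow_le_pow_left₀ hq0.le hr.1.le k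
  set a := r^k
  set b := q^k
  set s := q^(2*k)
  have hia : a * a⁻¹ = 1 := mul_inv_cancel₀ ha.ne'
  have hiapos : 0 < a⁻¹ := inv_pos.2 ha
  have hbia : b * a⁻¹ ≤ 1 := by
    calc b * a⁻¹ ≤ a * a⁻¹ := by apply mul_le_mul_of_nonneg_right hba hiapos.le
      _ = 1 := hia
  have hsia : s * a⁻¹ ≤ b := by
    rw [hs]
    calc b^2 * a⁻¹ = b * (b * a⁻¹) := by ring
      _ ≤ b * 1 := mul_le_mul_of_nonneg_left hbia hb.le
      _ = b := mul_one b
  have hainv_ge : a ≤ a⁻¹ := ha1.trans ((one_le_inv₀ ha).2 ha1)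
  have h1s : (0:ℝ) < 1 + s := by positivity
  have eP : cP q r k - a = s * (a⁻¹ - a) / (1 + s) := by
    rw [cP]
    field_simp
    ring
  have eQ : cQ q r k - a = s * (a - a⁻¹) / (1 - s) := by
    show (a - s * a⁻¹) / (1 - s) - a = _
    rw [eq_div_iff hs1.ne', sub_mul, div_mul_cancel₀ _ hs1.ne']
    ring
  have hspos : 0 < s := pow_pos hq0 _
  have hq2 : 0 < 1 - q^2 := by nlinarith
  have hnum : s * (a⁻¹ - a) ≤ b := by nlinarith [mul_pos hspos ha]
  have hnumnn : 0 ≤ s * (a⁻¹ - a) := by nlinarith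
  refine ⟨?_, ?_, ?_, ?_⟩
  · rw [eP, abs_of_nonneg (by positivity)]
    rw [div_le_iff₀ h1s]
    nlinarith
  · rw [eQ]
    have : s * (a - a⁻¹) / (1 - s) = -(s * (a⁻¹ - a) / (1 - s)) := by ring
    rw [this, abs_neg, abs_of_nonneg (div_nonneg hnumnn hs1.le)]
    exact div_le_div₀ hb.le hnum hq2 hs2
  · have hcp : cP q r k = (a + s * a⁻¹) / (1 + s) := rfl
    rw [hcp, abs_of_nonneg (by positivity)]
    calc (a + s * a⁻¹) / (1 + s) ≤ (a + s * a⁻¹) / 1 := by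
          apply div_le_div_of_nonneg_left (by positivity) one_pos (by linarith)
      _ = a + s * a⁻¹ := div_one _
      _ ≤ a + b := by linarith [hsia]
  · have hcq : cQ q r k = (a - s * a⁻¹) / (1 - s) := rfl
    rw [hcq, abs_div, abs_of_pos hs1]
    apply div_le_div₀ (by positivity) _ hq2 hs2
    calc |a - s * a⁻¹| ≤ |a| + |s * a⁻¹| := abs_sub _ _
      _ = a + s * a⁻¹ := by
          rw [abs_of_pos ha, abs_of_nonneg (by positivity)]
      _ ≤ a + b := by linarith [hsia]

lemma ebnd_tendsto_zero {q : ℝ} (hq0 : 0 < q) (hq1 : q < 1) (k : ℕ) :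
    Tendsto (fun r => |cP q r (k+1) - r^(k+1)| + |cQ q r (k+1) - r^(k+1)|)
      (nhdsWithin 1 (Set.Iio 1)) (nhds 0) := by
  obtain ⟨hb, hbq, hs, hsq, hs1, hs2⟩ := qpow_facts hq0 hq1 (k+1) (Nat.le_add_left 1 k)
  have hpow : ContinuousAt (fun r : ℝ => r^(k+1)) 1 := (continuous_pow (k+1)).continuousAt
  have hpowne : ((1:ℝ)^(k+1)) ≠ 0 := by norm_num
  have hinv : ContinuousAt (fun r : ℝ => (r^(k+1))⁻¹) 1 := hpow.inv₀ hpowne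
  have hcP : ContinuousAt (fun r : ℝ => cP q r (k+1)) 1 := by
    unfold cP
    exact (hpow.add (hinv.const_mul _)).div_const _
  have hcQ : ContinuousAt (fun r : ℝ => cQ q r (k+1)) 1 := by
    unfold cQ
    exact (hpow.sub (hinv.const_mul _)).div_const _
  have hF : ContinuousAt (fun r : ℝ => |cP q r (k+1) - r^(k+1)| + |cQ q r (k+1) - r^(k+1)|) 1 :=
    ((hcP.sub hpow).abs).add ((hcQ.sub hpow).abs)
  have hval : |cP q 1 (k+1) - (1:ℝ)^(k+1)| + |cQ q 1 (k+1) - (1:ℝ)^(k+1)| = 0 := by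
    have e1 : cP q 1 (k+1) = 1 := by
      unfold cP
      rw [one_pow, inv_one, mul_one, div_self (by positivity)]
    have e2 : cQ q 1 (k+1) = 1 := by
      unfold cQ
      rw [one_pow, inv_one, mul_one, div_self hs1.ne']
    rw [e1, e2, one_pow, sub_self, abs_zero, add_zero]
  have h2 : Tendsto (fun r : ℝ => |cP q r (k+1) - r^(k+1)| + |cQ q r (k+1) - r^(k+1)|)
      (nhdsWithin 1 (Set.Iio 1)) (nhds (|cP q 1 (k+1) - (1:ℝ)^(k+1)| + |cQ q 1 (k+1) - (1:ℝ)^(k+1)|)) :=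
    hF.tendsto.mono_left nhdsWithin_le_nhds
  rwa [hval] at h2

lemma E_tendsto_zero {q : ℝ} (hq0 : 0 < q) (hq1 : q < 1) :
    Tendsto (fun r => ∑' k : ℕ, (|cP q r (k+1) - r^(k+1)| + |cQ q r (k+1) - r^(k+1)|))
      (nhdsWithin 1 (Set.Iio 1)) (nhds 0) := by
  have hq2 : 0 < 1 - q^2 := by nlinarith
  have hbsum : Summable (fun k : ℕ => q^(k+1) * (1 + 1/(1-q^2))) := by
    apply Summable.mul_right
    exact (summable_nat_add_iff 1).2 (summable_geometric_of_lt_one hq0.le hq1)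
  have key := tendsto_tsum_of_dominated_convergence (𝓕 := nhdsWithin 1 (Set.Iio 1))
    (f := fun r (k : ℕ) => |cP q r (k+1) - r^(k+1)| + |cQ q r (k+1) - r^(k+1)|)
    (g := fun _ => (0:ℝ)) (bound := fun k => q^(k+1) * (1 + 1/(1-q^2))) hbsum
    (fun k => ebnd_tendsto_zero hq0 hq1 k) ?_
  · rw [tsum_zero] at key
    exact key
  · filter_upwards [Ioo_mem_nhdsLT_of_mem (Set.mem_Ioc.2 ⟨hq1, le_rfl⟩)] with r hr
    intro k
    obtain ⟨b1, b2, _, _⟩ := cP_bounds hq0 hq1 hr (k+1) (Nat.le_add_left 1 k)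
    rw [Real.norm_eq_abs, abs_of_nonneg (by positivity)]
    have : q^(k+1) * (1 + 1/(1-q^2)) = q^(k+1) + q^(k+1)/(1-q^2) := by ring
    rw [this]
    exact add_le_add b1 b2



lemma hasSum_intervalIntegral (a b : ℝ) (hab : a ≤ b) (u : ℕ → ℝ → ℝ) (c : ℕ → ℝ)
    (hu : ∀ k, Continuous (u k)) (hbd : ∀ k τ, τ ∈ Set.Ioc a b → |u k τ| ≤ c k)
    (hc : Summable c) :
    HasSum (fun k => ∫ τ in a..b, u k τ) (∫ τ in a..b, ∑' k, u k τ) := by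
  have hint : ∀ k, IntegrableOn (u k) (Set.Ioc a b) volume :=
    fun k => (hu k).integrableOn_Ioc
  have key := MeasureTheory.hasSum_integral_of_summable_integral_norm
    (μ := volume.restrict (Set.Ioc a b)) (F := u) (fun k => hint k) ?_
  · simp_rw [intervalIntegral.integral_of_le hab]
    exact key
  · apply Summable.of_nonneg_of_le (fun k => integral_nonneg (fun τ => norm_nonneg _))
      (fun k => ?_) (hc.mul_right (b - a))
    have h1 : ∫ τ in Set.Ioc a b, ‖u k τ‖ ∂volume ≤ ∫ τ in Set.Ioc a b, c k ∂volume := by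
      apply integral_mono_of_nonneg (Filter.Eventually.of_forall fun τ => norm_nonneg _)
        (integrable_const _)
      filter_upwards [ae_restrict_mem measurableSet_Ioc] with τ hτ
      exact hbd k τ hτ
    rw [MeasureTheory.integral_const] at h1
    simpa [Real.volume_Ioc, ENNReal.toReal_ofReal (sub_nonneg.2 hab), smul_eq_mul, max_eq_left (sub_nonneg.2 hab),
      mul_comm] using h1

noncomputable def gker (q r θ : ℝ) (k : ℕ) (τ : ℝ) : ℝ :=
  (1/π) * (cP q r (k+1) * Real.cos (((k:ℝ)+1)*θ) * Real.cos (((k:ℝ)+1)*τ)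
         + cQ q r (k+1) * Real.sin (((k:ℝ)+1)*θ) * Real.sin (((k:ℝ)+1)*τ))

noncomputable def pk (r θ : ℝ) (k : ℕ) (τ : ℝ) : ℝ :=
  (1/π) * r^(k+1) * Real.cos (((k:ℝ)+1)*(θ-τ))

lemma cos_mul_cont (c : ℝ) : Continuous (fun τ : ℝ => Real.cos (c*τ)) :=
  Real.continuous_cos.comp (continuous_const.mul continuous_id)

lemma sin_mul_cont (c : ℝ) : Continuous (fun τ : ℝ => Real.sin (c*τ)) :=
  Real.continuous_sin.comp (continuous_const.mul continuous_id)

lemma gker_cont (q r θ : ℝ) (k : ℕ) : Continuous (gker q r θ k) := by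
  unfold gker
  exact continuous_const.mul ((continuous_const.mul (cos_mul_cont _)).add
    (continuous_const.mul (sin_mul_cont _)))

lemma pk_cont (r θ : ℝ) (k : ℕ) : Continuous (pk r θ k) := by
  unfold pk
  exact continuous_const.mul
    (Real.continuous_cos.comp (continuous_const.mul (continuous_const.sub continuous_id)))

lemma stepA
    (q : ℝ) (hq0 : 0 < q) (hq1 : q < 1)
    (h : ℝ → ℝ) (hcont : Continuous h)
    (A B : ℕ → ℝ)
    (hA : ∀ k : ℕ, 1 ≤ k → A k =
      (1 / (π * (1 + q ^ (2 * k)))) * ∫ τ in (0 : ℝ)..(2 * π), h τ * Real.cos (k * τ))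
    (hB : ∀ k : ℕ, 1 ≤ k → B k =
      (1 / (π * (1 - q ^ (2 * k)))) * ∫ τ in (0 : ℝ)..(2 * π), h τ * Real.sin (k * τ))
    (f : ℝ → ℝ → ℝ)
    (hf : ∀ r θ : ℝ, f r θ = A 0 / 2 + ∑' k : ℕ,
      (A (k + 1) * (r ^ (k + 1) + q ^ (2 * (k + 1)) * r ^ (-((k : ℤ) + 1)))
          * Real.cos (((k : ℝ) + 1) * θ)
        + B (k + 1) * (r ^ (k + 1) - q ^ (2 * (k + 1)) * r ^ (-((k : ℤ) + 1)))
          * Real.sin (((k : ℝ) + 1) * θ)))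
    (θ : ℝ) (C : ℝ) (hC : ∀ x, |h x| ≤ C)
    {r : ℝ} (hr : r ∈ Set.Ioo q 1) :
    HasSum (fun k => ∫ τ in (0:ℝ)..(2*π), h τ * gker q r θ k τ) (f r θ - A 0 / 2) := by
  have hπ := Real.pi_pos
  have hr0 : 0 < r := hq0.trans hr.1
  have hq2 : 0 < 1 - q^2 := by nlinarith
  have hCnn : 0 ≤ C := le_trans (abs_nonneg _) (hC 0)
  -- bound for the interchange
  have hbd : ∀ k τ, τ ∈ Set.Ioc (0:ℝ) (2*π) →
      |h τ * gker q r θ k τ| ≤ C * ((1/π) * ((r^(k+1) + q^(k+1)) * (1 + 1/(1-q^2)))) := by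
    intro k τ _
    obtain ⟨_, _, b3, b4⟩ := cP_bounds hq0 hq1 hr (k+1) (Nat.le_add_left 1 k)
    rw [abs_mul]
    apply mul_le_mul (hC τ) _ (abs_nonneg _) hCnn
    unfold gker
    rw [abs_mul, abs_of_nonneg (by positivity : (0:ℝ) ≤ 1/π)]
    apply mul_le_mul_of_nonneg_left _ (by positivity)
    have e1 : |cP q r (k+1) * Real.cos (((k:ℝ)+1)*θ) * Real.cos (((k:ℝ)+1)*τ)|
        ≤ r^(k+1) + q^(k+1) := by
      rw [abs_mul, abs_mul]
      calc |cP q r (k+1)| * |Real.cos (((k:ℝ)+1)*θ)| * |Real.cos (((k:ℝ)+1)*τ)|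
          ≤ (r^(k+1) + q^(k+1)) * 1 * 1 := by
            apply mul_le_mul (mul_le_mul b3 (Real.abs_cos_le_one _) (abs_nonneg _)
              (by positivity)) (Real.abs_cos_le_one _) (abs_nonneg _) (by positivity)
        _ = r^(k+1) + q^(k+1) := by ring
    have e2 : |cQ q r (k+1) * Real.sin (((k:ℝ)+1)*θ) * Real.sin (((k:ℝ)+1)*τ)|
        ≤ (r^(k+1) + q^(k+1))/(1-q^2) := by
      rw [abs_mul, abs_mul]
      calc |cQ q r (k+1)| * |Real.sin (((k:ℝ)+1)*θ)| * |Real.sin (((k:ℝ)+1)*τ)|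
          ≤ ((r^(k+1) + q^(k+1))/(1-q^2)) * 1 * 1 := by
            apply mul_le_mul (mul_le_mul b4 (Real.abs_sin_le_one _) (abs_nonneg _)
              (by positivity)) (Real.abs_sin_le_one _) (abs_nonneg _) (by positivity)
        _ = (r^(k+1) + q^(k+1))/(1-q^2) := by ring
    calc |cP q r (k+1) * Real.cos (((k:ℝ)+1)*θ) * Real.cos (((k:ℝ)+1)*τ)
          + cQ q r (k+1) * Real.sin (((k:ℝ)+1)*θ) * Real.sin (((k:ℝ)+1)*τ)|
        ≤ (r^(k+1) + q^(k+1)) + (r^(k+1) + q^(k+1))/(1-q^2) := by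
          calc _ ≤ _ := abs_add_le _ _
            _ ≤ _ := add_le_add e1 e2
      _ = (r^(k+1) + q^(k+1)) * (1 + 1/(1-q^2)) := by ring
  have hsumbd : Summable (fun k : ℕ => C * ((1/π) * ((r^(k+1) + q^(k+1)) * (1 + 1/(1-q^2))))) := by
    apply Summable.mul_left
    apply Summable.mul_left
    apply Summable.mul_right
    apply Summable.add
    · exact (summable_nat_add_iff 1).2 (summable_geometric_of_lt_one hr0.le hr.2)
    · exact (summable_nat_add_iff 1).2 (summable_geometric_of_lt_one hq0.le hq1)
  have H := hasSum_intervalIntegral 0 (2*π) (by positivity)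
    (fun k τ => h τ * gker q r θ k τ) _
    (fun k => hcont.mul (gker_cont q r θ k)) hbd hsumbd
  -- identify the sum with f r θ - A 0 / 2
  have hterm : ∀ k : ℕ,
      A (k + 1) * (r ^ (k + 1) + q ^ (2 * (k + 1)) * r ^ (-((k : ℤ) + 1)))
          * Real.cos (((k : ℝ) + 1) * θ)
        + B (k + 1) * (r ^ (k + 1) - q ^ (2 * (k + 1)) * r ^ (-((k : ℤ) + 1)))
          * Real.sin (((k : ℝ) + 1) * θ)
      = ∫ τ in (0:ℝ)..(2*π), h τ * gker q r θ k τ := by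
    intro k
    obtain ⟨_, _, _, _, hs1, _⟩ := qpow_facts hq0 hq1 (k+1) (Nat.le_add_left 1 k)
    have h1s : (0:ℝ) < 1 + q^(2*(k+1)) := by positivity
    have hzpow : r ^ (-((k : ℤ) + 1)) = (r^(k+1))⁻¹ := by
      have : -((k : ℤ) + 1) = -((k+1 : ℕ) : ℤ) := by push_cast; ring
      rw [this, zpow_neg, zpow_natCast]
    -- rewrite the integral
    have hInt : ∫ τ in (0:ℝ)..(2*π), h τ * gker q r θ k τ
        = ((1/π) * cP q r (k+1) * Real.cos (((k:ℝ)+1)*θ))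
            * (∫ τ in (0:ℝ)..(2*π), h τ * Real.cos (((k:ℝ)+1) * τ))
          + ((1/π) * cQ q r (k+1) * Real.sin (((k:ℝ)+1)*θ))
            * (∫ τ in (0:ℝ)..(2*π), h τ * Real.sin (((k:ℝ)+1) * τ)) := by
      rw [← intervalIntegral.integral_const_mul, ← intervalIntegral.integral_const_mul,
        ← intervalIntegral.integral_add]
      · apply intervalIntegral.integral_congr
        intro τ _
        unfold gker
        ring
      · exact (continuous_const.mul (hcont.mul (cos_mul_cont _))).intervalIntegrable _ _
      · exact (continuous_const.mul (hcont.mul (sin_mul_cont _))).intervalIntegrable _ _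
    rw [hInt, hA (k+1) (Nat.le_add_left 1 k), hB (k+1) (Nat.le_add_left 1 k), hzpow]
    have hcast : ((k+1 : ℕ) : ℝ) = (k:ℝ)+1 := by push_cast; ring
    rw [hcast]
    have ecP : r ^ (k + 1) + q ^ (2 * (k + 1)) * (r^(k+1))⁻¹
        = cP q r (k+1) * (1 + q^(2*(k+1))) := by
      rw [cP, div_mul_cancel₀ _ h1s.ne']
    have ecQ : r ^ (k + 1) - q ^ (2 * (k + 1)) * (r^(k+1))⁻¹
        = cQ q r (k+1) * (1 - q^(2*(k+1))) := by
      rw [cQ, div_mul_cancel₀ _ hs1.ne']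
    rw [ecP, ecQ]
    field_simp
  rw [hf r θ]
  have : A 0 / 2 + (∑' k : ℕ,
      (A (k + 1) * (r ^ (k + 1) + q ^ (2 * (k + 1)) * r ^ (-((k : ℤ) + 1)))
          * Real.cos (((k : ℝ) + 1) * θ)
        + B (k + 1) * (r ^ (k + 1) - q ^ (2 * (k + 1)) * r ^ (-((k : ℤ) + 1)))
          * Real.sin (((k : ℝ) + 1) * θ))) - A 0 / 2
      = ∑' k : ℕ, ∫ τ in (0:ℝ)..(2*π), h τ * gker q r θ k τ := by
    rw [add_sub_cancel_left]
    exact tsum_congr hterm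
  rw [this, H.tsum_eq]
  exact H

lemma stepB
    (h : ℝ → ℝ) (hcont : Continuous h)
    (θ : ℝ) (C : ℝ) (hC : ∀ x, |h x| ≤ C)
    {r : ℝ} (hr0 : 0 ≤ r) (hr1 : r < 1) :
    HasSum (fun k => ∫ τ in (0:ℝ)..(2*π), h τ * pk r θ k τ)
      ((1/(2*π)) * (∫ τ in (0:ℝ)..(2*π), h τ * pker r (θ - τ))
        - (1/(2*π)) * ∫ τ in (0:ℝ)..(2*π), h τ) := by
  have hπ := Real.pi_pos
  have hCnn : 0 ≤ C := le_trans (abs_nonneg _) (hC 0)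
  have hps : ∀ τ, HasSum (fun k => h τ * pk r θ k τ)
      (h τ * (1/(2*π)) * (pker r (θ - τ) - 1)) := by
    intro τ
    have := (hasSum_pker hr0 hr1 (θ - τ)).mul_left (h τ * (1/(2*π)))
    apply this.congr_fun
    intro k
    unfold pk
    field_simp
  have hbd : ∀ k τ, τ ∈ Set.Ioc (0:ℝ) (2*π) →
      |h τ * pk r θ k τ| ≤ C * ((1/π) * r^(k+1)) := by
    intro k τ _
    rw [abs_mul]
    apply mul_le_mul (hC τ) _ (abs_nonneg _) hCnn
    unfold pk
    rw [abs_mul, abs_mul, abs_of_nonneg (by positivity : (0:ℝ) ≤ 1/π),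
      abs_of_nonneg (by positivity : (0:ℝ) ≤ r^(k+1))]
    calc 1/π * r^(k+1) * |Real.cos (((k:ℝ)+1)*(θ-τ))| ≤ 1/π * r^(k+1) * 1 :=
        mul_le_mul_of_nonneg_left (Real.abs_cos_le_one _) (by positivity)
      _ = 1/π * r^(k+1) := mul_one _
  have hsumbd : Summable (fun k : ℕ => C * ((1/π) * r^(k+1))) :=
    Summable.mul_left _ (Summable.mul_left _
      ((summable_nat_add_iff 1).2 (summable_geometric_of_lt_one hr0 hr1)))
  have H := hasSum_intervalIntegral 0 (2*π) (by positivity)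
    (fun k τ => h τ * pk r θ k τ) _
    (fun k => hcont.mul (pk_cont r θ k)) hbd hsumbd
  have heq : ∫ τ in (0:ℝ)..(2*π), (∑' k, h τ * pk r θ k τ)
      = (1/(2*π)) * (∫ τ in (0:ℝ)..(2*π), h τ * pker r (θ - τ))
        - (1/(2*π)) * ∫ τ in (0:ℝ)..(2*π), h τ := by
    have e1 : ∀ τ, (∑' k, h τ * pk r θ k τ)
        = (1/(2*π)) * (h τ * pker r (θ - τ)) - (1/(2*π)) * h τ := by
      intro τ
      rw [(hps τ).tsum_eq]
      ring
    rw [intervalIntegral.integral_congr (fun τ _ => e1 τ)]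
    rw [intervalIntegral.integral_sub, intervalIntegral.integral_const_mul,
      intervalIntegral.integral_const_mul]
    · exact (continuous_const.mul (hcont.mul ((pker_cont hr0 hr1).comp
        (continuous_const.sub continuous_id)))).intervalIntegrable _ _
    · exact (continuous_const.mul hcont).intervalIntegrable _ _
  rw [← heq]
  exact H

lemma diff_bound
    (q : ℝ) (hq0 : 0 < q) (hq1 : q < 1)
    (h : ℝ → ℝ) (hcont : Continuous h)
    (A B : ℕ → ℝ)
    (hA0 : A 0 = (1 / π) * ∫ τ in (0 : ℝ)..(2 * π), h τ)
    (hA : ∀ k : ℕ, 1 ≤ k → A k =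
      (1 / (π * (1 + q ^ (2 * k)))) * ∫ τ in (0 : ℝ)..(2 * π), h τ * Real.cos (k * τ))
    (hB : ∀ k : ℕ, 1 ≤ k → B k =
      (1 / (π * (1 - q ^ (2 * k)))) * ∫ τ in (0 : ℝ)..(2 * π), h τ * Real.sin (k * τ))
    (f : ℝ → ℝ → ℝ)
    (hf : ∀ r θ : ℝ, f r θ = A 0 / 2 + ∑' k : ℕ,
      (A (k + 1) * (r ^ (k + 1) + q ^ (2 * (k + 1)) * r ^ (-((k : ℤ) + 1)))
          * Real.cos (((k : ℝ) + 1) * θ)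
        + B (k + 1) * (r ^ (k + 1) - q ^ (2 * (k + 1)) * r ^ (-((k : ℤ) + 1)))
          * Real.sin (((k : ℝ) + 1) * θ)))
    (θ : ℝ) (C : ℝ) (hC : ∀ x, |h x| ≤ C)
    {r : ℝ} (hr : r ∈ Set.Ioo q 1) :
    |f r θ - (1/(2*π)) * ∫ τ in (0:ℝ)..(2*π), h τ * pker r (θ - τ)|
      ≤ (2*C) * ∑' k : ℕ, (|cP q r (k+1) - r^(k+1)| + |cQ q r (k+1) - r^(k+1)|) := by
  have hπ := Real.pi_pos
  have hr0 : 0 < r := hq0.trans hr.1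
  have hq2 : 0 < 1 - q^2 := by nlinarith
  have hCnn : 0 ≤ C := le_trans (abs_nonneg _) (hC 0)
  have HA := stepA q hq0 hq1 h hcont A B hA hB f hf θ C hC hr
  have HB := stepB h hcont θ C hC hr0.le hr.2
  have hA0' : (1/(2*π)) * ∫ τ in (0:ℝ)..(2*π), h τ = A 0 / 2 := by
    rw [hA0]; ring
  rw [hA0'] at HB
  have HD := HA.sub HB
  have hDval : f r θ - A 0 / 2 - ((1/(2*π)) * (∫ τ in (0:ℝ)..(2*π), h τ * pker r (θ - τ)) - A 0/2)
      = f r θ - (1/(2*π)) * ∫ τ in (0:ℝ)..(2*π), h τ * pker r (θ - τ) := by ring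
  rw [hDval] at HD
  -- bound sequence
  have hebnd : Summable (fun k : ℕ => |cP q r (k+1) - r^(k+1)| + |cQ q r (k+1) - r^(k+1)|) := by
    apply Summable.of_nonneg_of_le (fun k => by positivity) (fun k => ?_)
      (((summable_nat_add_iff 1).2 (summable_geometric_of_lt_one hq0.le hq1)).mul_right
        (1 + 1/(1-q^2)))
    obtain ⟨b1, b2, _, _⟩ := cP_bounds hq0 hq1 hr (k+1) (Nat.le_add_left 1 k)
    have : q^(k+1) * (1 + 1/(1-q^2)) = q^(k+1) + q^(k+1)/(1-q^2) := by ring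
    rw [this]
    exact add_le_add b1 b2
  have hboundsum := (hebnd.hasSum.mul_left (2*C))
  rw [← HD.tsum_eq, ← Real.norm_eq_abs]
  apply tsum_of_norm_bounded hboundsum
  intro k
  obtain ⟨b1, b2, _, _⟩ := cP_bounds hq0 hq1 hr (k+1) (Nat.le_add_left 1 k)
  have hgsub : ∀ τ : ℝ, h τ * gker q r θ k τ - h τ * pk r θ k τ
      = h τ * ((1/π) * ((cP q r (k+1) - r^(k+1)) * Real.cos (((k:ℝ)+1)*θ) * Real.cos (((k:ℝ)+1)*τ)
        + (cQ q r (k+1) - r^(k+1)) * Real.sin (((k:ℝ)+1)*θ) * Real.sin (((k:ℝ)+1)*τ))) := by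
    intro τ
    unfold gker pk
    rw [mul_sub (((k:ℝ)+1)) θ τ, Real.cos_sub]
    ring
  have hsubint : (∫ τ in (0:ℝ)..(2*π), h τ * gker q r θ k τ)
      - (∫ τ in (0:ℝ)..(2*π), h τ * pk r θ k τ)
      = ∫ τ in (0:ℝ)..(2*π), (h τ * gker q r θ k τ - h τ * pk r θ k τ) := by
    rw [intervalIntegral.integral_sub (f := fun τ => h τ * gker q r θ k τ)
      (g := fun τ => h τ * pk r θ k τ)
      ((hcont.mul (gker_cont q r θ k)).intervalIntegrable _ _)
      ((hcont.mul (pk_cont r θ k)).intervalIntegrable _ _)]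
  show ‖(∫ τ in (0:ℝ)..(2*π), h τ * gker q r θ k τ) - ∫ τ in (0:ℝ)..(2*π), h τ * pk r θ k τ‖
      ≤ 2*C*(|cP q r (k+1) - r^(k+1)| + |cQ q r (k+1) - r^(k+1)|)
  rw [hsubint]
  have key := intervalIntegral.norm_integral_le_of_norm_le_const
    (C := C * ((1/π) * (|cP q r (k+1) - r^(k+1)| + |cQ q r (k+1) - r^(k+1)|)))
    (f := fun τ => h τ * gker q r θ k τ - h τ * pk r θ k τ) (a := 0) (b := 2*π) ?_
  · refine key.trans ?_
    rw [sub_zero, abs_of_nonneg (by positivity : (0:ℝ) ≤ 2*π)]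
    rw [show C * (1 / π * (|cP q r (k + 1) - r ^ (k + 1)| + |cQ q r (k + 1) - r ^ (k + 1)|)) * (2 * π)
      = (2*C*(|cP q r (k+1) - r^(k+1)| + |cQ q r (k+1) - r^(k+1)|)) * (π / π) from by ring]
    rw [div_self hπ.ne', mul_one]
  · intro x _
    show ‖h x * gker q r θ k x - h x * pk r θ k x‖ ≤ _
    rw [hgsub x, Real.norm_eq_abs, abs_mul]
    apply mul_le_mul (hC x) _ (abs_nonneg _) hCnn
    rw [abs_mul, abs_of_nonneg (by positivity : (0:ℝ) ≤ 1/π)]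
    apply mul_le_mul_of_nonneg_left _ (by positivity)
    calc |(cP q r (k+1) - r^(k+1)) * Real.cos (((k:ℝ)+1)*θ) * Real.cos (((k:ℝ)+1)*x)
          + (cQ q r (k+1) - r^(k+1)) * Real.sin (((k:ℝ)+1)*θ) * Real.sin (((k:ℝ)+1)*x)|
        ≤ |(cP q r (k+1) - r^(k+1)) * Real.cos (((k:ℝ)+1)*θ) * Real.cos (((k:ℝ)+1)*x)|
          + |(cQ q r (k+1) - r^(k+1)) * Real.sin (((k:ℝ)+1)*θ) * Real.sin (((k:ℝ)+1)*x)| :=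
          abs_add_le _ _
      _ ≤ |cP q r (k+1) - r^(k+1)| + |cQ q r (k+1) - r^(k+1)| := by
          apply add_le_add
          · rw [abs_mul, abs_mul]
            calc |cP q r (k+1) - r^(k+1)| * |Real.cos (((k:ℝ)+1)*θ)| * |Real.cos (((k:ℝ)+1)*x)|
                ≤ |cP q r (k+1) - r^(k+1)| * 1 * 1 := by
                  apply mul_le_mul (mul_le_mul_of_nonneg_left (Real.abs_cos_le_one _)
                    (abs_nonneg _)) (Real.abs_cos_le_one _) (abs_nonneg _) (by positivity)
              _ = |cP q r (k+1) - r^(k+1)| := by ring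
          · rw [abs_mul, abs_mul]
            calc |cQ q r (k+1) - r^(k+1)| * |Real.sin (((k:ℝ)+1)*θ)| * |Real.sin (((k:ℝ)+1)*x)|
                ≤ |cQ q r (k+1) - r^(k+1)| * 1 * 1 := by
                  apply mul_le_mul (mul_le_mul_of_nonneg_left (Real.abs_sin_le_one _)
                    (abs_nonneg _)) (Real.abs_sin_le_one _) (abs_nonneg _) (by positivity)
              _ = |cQ q r (k+1) - r^(k+1)| := by ring


/-- for continuous periodic boundary data `h`, the annulus series
solution attains the boundary value: `f(r,θ) → h(θ)` as `r → 1⁻`. -/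
theorem annulus_series_boundary
    (q : ℝ) (hq0 : 0 < q) (hq1 : q < 1)
    (h : ℝ → ℝ) (hcont : Continuous h) (hper : Function.Periodic h (2 * π))
    (A B : ℕ → ℝ)
    (hA0 : A 0 = (1 / π) * ∫ τ in (0 : ℝ)..(2 * π), h τ)
    (hA : ∀ k : ℕ, 1 ≤ k → A k =
      (1 / (π * (1 + q ^ (2 * k)))) * ∫ τ in (0 : ℝ)..(2 * π), h τ * Real.cos (k * τ))
    (hB : ∀ k : ℕ, 1 ≤ k → B k =
      (1 / (π * (1 - q ^ (2 * k)))) * ∫ τ in (0 : ℝ)..(2 * π), h τ * Real.sin (k * τ))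
    (f : ℝ → ℝ → ℝ)
    (hf : ∀ r θ : ℝ, f r θ = A 0 / 2 + ∑' k : ℕ,
      (A (k + 1) * (r ^ (k + 1) + q ^ (2 * (k + 1)) * r ^ (-((k : ℤ) + 1)))
          * Real.cos (((k : ℝ) + 1) * θ)
        + B (k + 1) * (r ^ (k + 1) - q ^ (2 * (k + 1)) * r ^ (-((k : ℤ) + 1)))
          * Real.sin (((k : ℝ) + 1) * θ)))
    (θ : ℝ) :
    Filter.Tendsto (fun r => f r θ) (nhdsWithin 1 (Set.Iio 1)) (nhds (h θ)) := by
  obtain ⟨C, hCpos, hC⟩ := periodic_bound hcont hper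
  have hmain := poisson_limit hcont hper θ
  have hE := E_tendsto_zero hq0 hq1
  have hdiff : Filter.Tendsto
      (fun r => f r θ - (1/(2*π)) * ∫ τ in (0:ℝ)..(2*π), h τ * pker r (θ - τ))
      (nhdsWithin 1 (Set.Iio 1)) (nhds 0) := by
    refine squeeze_zero_norm' (a := fun r => (2*C) * ∑' k : ℕ, (|cP q r (k+1) - r^(k+1)| + |cQ q r (k+1) - r^(k+1)|)) ?_ ?_
    · filter_upwards [Ioo_mem_nhdsLT_of_mem (Set.mem_Ioc.2 ⟨hq1, le_rfl⟩)] with r hr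
      rw [Real.norm_eq_abs]
      exact diff_bound q hq0 hq1 h hcont A B hA0 hA hB f hf θ C hC hr
    · have h2 := hE.const_mul (2*C)
      simpa using h2
  have hfin := hdiff.add hmain
  rw [zero_add] at hfin
  apply hfin.congr
  intro r
  ring
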